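/- Suppose there is a vertex v* of ℱ with v* ∈ ℱ ∩ 𝒫⁺. Let P̃ ⊆ 𝒫 be any n-dimensional polytope having ℱ as a facet. Then 𝒫 →_𝒫 ℱ implies P̃ →_{P̃} ℱ. -/

import Mathlib

open Matrix Set

/-- A trajectory of the control system `ẋ = f(x,u)` on the time interval `[0,T]`. -/
def IsTrajOn {n m : ℕ} (f : (Fin n → ℝ) → (Fin m → ℝ) → (Fin n → ℝ))
    (u : ℝ → Fin m → ℝ) (x : ℝ → Fin n → ℝ) (T : ℝ) : Prop :=
  ∀ t ∈ Set.Icc (0:ℝ) T, HasDerivAt x (f (x t) (u t)) t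

/-- `x₀` can reach `Ωf` with constraint in `Ω`. -/
def CanReach {n m : ℕ} (f : (Fin n → ℝ) → (Fin m → ℝ) → (Fin n → ℝ))
    (Ω Ωf : Set (Fin n → ℝ)) (x₀ : Fin n → ℝ) : Prop :=
  ∃ (u : ℝ → Fin m → ℝ) (x : ℝ → Fin n → ℝ) (T : ℝ), 0 ≤ T ∧
    IsTrajOn f u x T ∧ x 0 = x₀ ∧ (∀ t ∈ Set.Icc (0:ℝ) T, x t ∈ Ω) ∧ x T ∈ Ωf

/-- Controllability of the pair `(A,B)`. -/
def Controllable {n m : ℕ} (A : Matrix (Fin n) (Fin n) ℝ)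
    (B : Matrix (Fin n) (Fin m) ℝ) : Prop :=
  (⨆ i : Fin n, LinearMap.range ((Matrix.toLin' A ^ (i : ℕ)).comp (Matrix.toLin' B))) = ⊤

/-- Any differentiable path whose velocity differs from the drift `Ax + a` by a vector
orthogonal to `β` (hence lying in the range of `B`) is realizable as a controlled
trajectory of the system. -/
lemma canReach_of_path {n m : ℕ}
    (A : Matrix (Fin n) (Fin n) ℝ) (a : Fin n → ℝ) (B : Matrix (Fin n) (Fin m) ℝ)
    (β : Fin n → ℝ)
    (hrange : ∀ v : Fin n → ℝ, β ⬝ᵥ v = 0 → ∃ w, B.mulVec w = v)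
    (Ω Ωf : Set (Fin n → ℝ)) (x₀ : Fin n → ℝ)
    (T : ℝ) (hT : 0 ≤ T) (y d : ℝ → Fin n → ℝ)
    (hderiv : ∀ t ∈ Set.Icc (0:ℝ) T, HasDerivAt y (d t) t)
    (hfeas : ∀ t ∈ Set.Icc (0:ℝ) T, β ⬝ᵥ (d t - (A.mulVec (y t) + a)) = 0)
    (hmem : ∀ t ∈ Set.Icc (0:ℝ) T, y t ∈ Ω)
    (hy0 : y 0 = x₀) (hyT : y T ∈ Ωf) :
    CanReach (fun x u => A.mulVec x + a + B.mulVec u) Ω Ωf x₀ := by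
  classical
  refine ⟨fun t => if h : ∃ w, B.mulVec w = d t - (A.mulVec (y t) + a) then h.choose else 0,
    y, T, hT, fun t ht => ?_, hy0, hmem, hyT⟩
  have hex := hrange _ (hfeas t ht)
  simp only [dif_pos hex]
  have h2 := hex.choose_spec
  have h3 : A.mulVec (y t) + a + B.mulVec hex.choose = d t := by rw [h2]; abel
  rw [h3]
  exact hderiv t ht

set_option maxHeartbeats 2000000 in
/-- If some vertex `v*` of `ℱ` lies in `ℱ ∩ 𝒫⁺`, and `P̃ ⊆ 𝒫` is an `n`-dimensional
polytope with `ℱ` as a facet, then `𝒫 →_𝒫 ℱ` implies `P̃ →_{P̃} ℱ`. -/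
theorem subpolytope_reach {n m : ℕ}
    (A : Matrix (Fin n) (Fin n) ℝ) (a : Fin n → ℝ) (B : Matrix (Fin n) (Fin m) ℝ)
    (hBrank : B.rank = n - 1) (hctrb : Controllable A B)
    (V : Finset (Fin n → ℝ)) (P : Set (Fin n → ℝ))
    (hP : P = convexHull ℝ (V : Set (Fin n → ℝ)))
    (hPfull : (interior P).Nonempty)
    (O : Set (Fin n → ℝ)) (hO : O = {x | A.mulVec x + a ∈ Set.range B.mulVec})
    (hdisj : interior P ∩ O = ∅)
    (W : Finset (Fin n → ℝ)) (F : Set (Fin n → ℝ))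
    (hF : F = convexHull ℝ (W : Set (Fin n → ℝ)))
    (hFsub : F ⊆ frontier P)
    (hFdim : Module.finrank ℝ (vectorSpan ℝ F) = n - 1)
    (β : Fin n → ℝ) (hβ1 : β ⬝ᵥ β = 1)
    (hβB : ∀ w : Fin m → ℝ, β ⬝ᵥ B.mulVec w = 0)
    (hβsign : ∀ x ∈ P, β ⬝ᵥ (A.mulVec x + a) ≤ 0)
    (vstar : Fin n → ℝ) (hvstar : vstar ∈ Set.extremePoints ℝ F)
    (hvstarF : vstar ∈ F) (hvstarPplus : ∀ y ∈ P, β ⬝ᵥ y ≤ β ⬝ᵥ vstar)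
    (Vt : Finset (Fin n → ℝ)) (Pt : Set (Fin n → ℝ))
    (hPt : Pt = convexHull ℝ (Vt : Set (Fin n → ℝ)))
    (hPtsub : Pt ⊆ P) (hPtfull : (interior Pt).Nonempty)
    (hFfacet : IsExtreme ℝ Pt F)
    (hreach : ∀ x ∈ P, CanReach (fun x u => A.mulVec x + a + B.mulVec u) P F x) :
    ∀ x ∈ Pt, CanReach (fun x u => A.mulVec x + a + B.mulVec u) Pt F x := by
  classical
  intro x₀ hx₀
  -- the linear functional v ↦ β ⬝ᵥ v
  set φ : (Fin n → ℝ) →ₗ[ℝ] ℝ :=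
    { toFun := fun v => β ⬝ᵥ v
      map_add' := fun u v => by simp [dotProduct_add]
      map_smul' := fun r v => by simp [dotProduct_smul] } with hφdef
  have hφapp : ∀ v, φ v = β ⬝ᵥ v := fun v => rfl
  -- every vector orthogonal to β is in the range of B
  have hrange : ∀ v : Fin n → ℝ, β ⬝ᵥ v = 0 → ∃ w, B.mulVec w = v := by
    have hle : LinearMap.range B.mulVecLin ≤ LinearMap.ker φ := by
      rintro v ⟨w, rfl⟩
      simpa [Matrix.mulVecLin_apply, hφapp] using hβB w
    have hsurj : Function.Surjective φ := by
      intro r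
      exact ⟨r • β, by simp [hφapp, dotProduct_smul, hβ1]⟩
    have hker : Module.finrank ℝ (LinearMap.ker φ) = n - 1 := by
      have h1 := LinearMap.finrank_range_add_finrank_ker φ
      rw [LinearMap.range_eq_top.2 hsurj, finrank_top, Module.finrank_self,
        Module.finrank_fin_fun] at h1
      omega
    have heq : LinearMap.range B.mulVecLin = LinearMap.ker φ := by
      apply Submodule.eq_of_le_of_finrank_le hle
      rw [hker]
      have hBr : Module.finrank ℝ (LinearMap.range B.mulVecLin) = n - 1 := hBrank
      omega
    intro v hv
    have hv' : v ∈ LinearMap.ker φ := by simpa [LinearMap.mem_ker, hφapp] using hv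
    rw [← heq] at hv'
    obtain ⟨w, hw⟩ := hv'
    exact ⟨w, by simpa [Matrix.mulVecLin_apply] using hw⟩
  -- abbreviation for the drift functional
  set g : (Fin n → ℝ) → ℝ := fun y => β ⬝ᵥ (A.mulVec y + a) with hgdef
  have hgle : ∀ y ∈ P, g y ≤ 0 := hβsign
  have hPtconv : Convex ℝ Pt := hPt ▸ convex_convexHull ℝ _
  have hFconv : Convex ℝ F := hF ▸ convex_convexHull ℝ _
  have hFPt : F ⊆ Pt := hFfacet.1
  have hx₀P : x₀ ∈ P := hPtsub hx₀
  have hvstarPt : vstar ∈ Pt := hFPt hvstarF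
  -- trivial reach when already in F
  have htriv : x₀ ∈ F → CanReach (fun x u => A.mulVec x + a + B.mulVec u) Pt F x₀ := by
    intro hx₀F
    refine canReach_of_path A a B β hrange Pt F x₀ 0 le_rfl
      (fun t => x₀ + t • (A.mulVec x₀ + a)) (fun _ => A.mulVec x₀ + a) ?_ ?_ ?_ (by simp) ?_
    · intro t ht
      simpa [one_smul] using ((hasDerivAt_id t).smul_const (A.mulVec x₀ + a)).const_add x₀
    · intro t ht
      have ht0 : t = 0 := le_antisymm ht.2 ht.1
      subst ht0
      simp
    · intro t ht
      have ht0 : t = 0 := le_antisymm ht.2 ht.1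
      subst ht0
      simpa using hx₀
    · simpa using hx₀F
  -- use reachability on P from x₀
  obtain ⟨u, x, T, hT, htraj, hx0, hxP, hxT⟩ := hreach x₀ hx₀P
  have hsder : ∀ t ∈ Icc (0:ℝ) T, HasDerivAt (fun r => β ⬝ᵥ x r) (g (x t)) t := by
    intro t ht
    have h1 := (LinearMap.toContinuousLinearMap φ).hasFDerivAt.comp_hasDerivAt t (htraj t ht)
    have h2 : (LinearMap.toContinuousLinearMap φ) (A.mulVec (x t) + a + B.mulVec (u t))
        = g (x t) := by
      simp [LinearMap.coe_toContinuousLinearMap', hφapp, hgdef, dotProduct_add, hβB]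
    rw [h2] at h1
    exact h1
  rcases eq_or_lt_of_le hT with hT0 | hTpos
  · -- T = 0 : x₀ is already in F
    apply htriv
    rw [← hx0, hT0]
    exact hxT
  -- T > 0
  set s : ℝ → ℝ := fun t => β ⬝ᵥ x t with hsdef
  have hsmono : AntitoneOn s (Icc 0 T) := by
    apply antitoneOn_of_deriv_nonpos (convex_Icc 0 T)
    · intro t ht
      exact (hsder t ht).continuousAt.continuousWithinAt
    · intro t ht
      rw [interior_Icc] at ht
      exact (hsder t (Ioo_subset_Icc_self ht)).differentiableAt.differentiableWithinAt
    · intro t ht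
      rw [interior_Icc] at ht
      rw [(hsder t (Ioo_subset_Icc_self ht)).deriv]
      exact hgle _ (hxP t (Ioo_subset_Icc_self ht))
  set z₀ : Fin n → ℝ := x T with hz₀def
  have hz₀F : z₀ ∈ F := hxT
  have hz₀Pt : z₀ ∈ Pt := hFPt hz₀F
  have hz₀P : z₀ ∈ P := hxP T (right_mem_Icc.2 hT)
  have hc_le : β ⬝ᵥ z₀ ≤ β ⬝ᵥ x₀ := by
    have h := hsmono (left_mem_Icc.2 hT) (right_mem_Icc.2 hT) hT
    simpa [hsdef, hx0] using h
  -- the affine expansion of g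
  have hgaff : ∀ (r t : ℝ), g (x₀ + r • (z₀ - x₀) + t • (vstar - x₀))
      = g x₀ + r * (g z₀ - g x₀) + t * (g vstar - g x₀) := by
    intro r t
    simp only [hgdef, Matrix.mulVec_add, Matrix.mulVec_smul, Matrix.mulVec_sub,
      dotProduct_add, dotProduct_smul, dotProduct_sub, smul_eq_mul]
    ring
  rcases eq_or_lt_of_le hc_le with hceq | hclt
  · -- horizontal case : β ⬝ᵥ z₀ = β ⬝ᵥ x₀, the drift vanishes along the segment
    have hconst : ∀ t ∈ Icc (0:ℝ) T, s t = s 0 := by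
      intro t ht
      have h1 : s t ≤ s 0 := hsmono (left_mem_Icc.2 hT) ht ht.1
      have h2 : s T ≤ s t := hsmono ht (right_mem_Icc.2 hT) ht.2
      have h4 : s 0 = β ⬝ᵥ x₀ := by simp [hsdef, hx0]
      have h5 : s T = β ⬝ᵥ z₀ := rfl
      linarith [hceq.le, hceq.ge]
    have hgz : ∀ t ∈ Icc (0:ℝ) T, g (x t) = 0 := by
      intro t ht
      have hwithin : HasDerivWithinAt s (g (x t)) (Icc 0 T) t := (hsder t ht).hasDerivWithinAt
      have hzero : HasDerivWithinAt s 0 (Icc 0 T) t :=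
        (hasDerivWithinAt_const t _ (s 0)).congr (fun r hr => hconst r hr) (hconst t ht)
      have hu := (uniqueDiffOn_Icc hTpos) t ht
      have e1 := hwithin.derivWithin hu
      have e2 := hzero.derivWithin hu
      rw [← e1]
      exact e2
    have hγ₀ : g x₀ = 0 := by
      have h := hgz 0 (left_mem_Icc.2 hT)
      rwa [hx0] at h
    have hγ₁ : g z₀ = 0 := hgz T (right_mem_Icc.2 hT)
    refine canReach_of_path A a B β hrange Pt F x₀ 1 zero_le_one
      (fun t => x₀ + t • (z₀ - x₀)) (fun _ => z₀ - x₀) ?_ ?_ ?_ (by simp) ?_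
    · intro t ht
      simpa [one_smul] using ((hasDerivAt_id t).smul_const (z₀ - x₀)).const_add x₀
    · intro t ht
      have h1 : β ⬝ᵥ (z₀ - x₀ - (A.mulVec (x₀ + t • (z₀ - x₀)) + a))
          = β ⬝ᵥ (z₀ - x₀) - g (x₀ + t • (z₀ - x₀)) := by
        simp [hgdef, dotProduct_sub]
      have h2 : x₀ + t • (z₀ - x₀) = x₀ + t • (z₀ - x₀) + (0:ℝ) • (vstar - x₀) := by
        simp
      rw [h1, h2, hgaff t 0, hγ₀, hγ₁]
      simp [dotProduct_sub]
      linarith [hceq]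
    · intro t ht
      show x₀ + t • (z₀ - x₀) ∈ Pt
      have hco : x₀ + t • (z₀ - x₀) = (1 - t) • x₀ + t • z₀ := by module
      rw [hco]
      exact hPtconv hx₀ hz₀Pt (by linarith [ht.2]) ht.1 (by ring)
    · simpa [one_smul] using hz₀F
  · -- main case : β ⬝ᵥ z₀ < β ⬝ᵥ x₀
    set c : ℝ := β ⬝ᵥ z₀ - β ⬝ᵥ x₀ with hcdef
    have hc : c < 0 := by simp only [hcdef]; linarith
    set e : ℝ := β ⬝ᵥ vstar - β ⬝ᵥ x₀ with hedef
    have he : 0 ≤ e := by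
      have h := hvstarPplus x₀ hx₀P
      simp only [hedef]; linarith
    have hγ₀ : g x₀ ≤ 0 := hgle x₀ hx₀P
    have hγ₁ : g z₀ ≤ 0 := hgle z₀ hz₀P
    have hγ₂ : g vstar ≤ 0 := hgle vstar (hPtsub hvstarPt)
    set α : ℝ := (g z₀ - g x₀) / c with hαdef
    set p : ℝ := (g x₀ - e) / c with hpdef
    set q : ℝ := (g vstar - g x₀) / c with hqdef
    have hp : 0 ≤ p := div_nonneg_of_nonpos (by linarith) hc.le
    have hpq : 0 ≤ p + q := by
      have h1 : p + q = (g vstar - e) / c := by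
        rw [hpdef, hqdef, ← add_div]
        ring_nf
      rw [h1]
      exact div_nonneg_of_nonpos (by linarith) hc.le
    have hf01 : ∀ r ∈ Icc (0:ℝ) 1, 0 ≤ p + q * r := by
      intro r hr
      nlinarith [hr.1, hr.2, hp, hpq]
    obtain ⟨a₁, ha₁d, ha₁0, ha₁nn⟩ :
        ∃ a₁ : ℝ → ℝ, (∀ t : ℝ, HasDerivAt a₁ (α * a₁ t + (p + q * t)) t) ∧ a₁ 0 = 0 ∧
          ∀ t ∈ Icc (0:ℝ) 1, 0 ≤ a₁ t := by
      have hιcont : Continuous fun r : ℝ => Real.exp (-α * r) * (p + q * r) := by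
        apply Continuous.mul
        · exact Real.continuous_exp.comp (continuous_const.mul continuous_id)
        · exact continuous_const.add (continuous_const.mul continuous_id)
      refine ⟨fun t => Real.exp (α * t) *
        ∫ r in (0:ℝ)..t, Real.exp (-α * r) * (p + q * r), ?_, by simp, ?_⟩
      · intro t
        have h1 : HasDerivAt (fun r : ℝ => Real.exp (α * r)) (Real.exp (α * t) * α) t := by
          simpa using ((hasDerivAt_id t).const_mul α).exp
        have h2 : HasDerivAt
            (fun r : ℝ => ∫ w in (0:ℝ)..r, Real.exp (-α * w) * (p + q * w))
            (Real.exp (-α * t) * (p + q * t)) t :=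
          intervalIntegral.integral_hasDerivAt_right (hιcont.intervalIntegrable _ _)
            (hιcont.stronglyMeasurableAtFilter _ _) hιcont.continuousAt
        have h3 := h1.mul h2
        have hexp : Real.exp (α * t) * Real.exp (-α * t) = 1 := by
          rw [← Real.exp_add]
          ring_nf
          exact Real.exp_zero
        have h4 : Real.exp (α * t) * α * (∫ w in (0:ℝ)..t, Real.exp (-α * w) * (p + q * w))
              + Real.exp (α * t) * (Real.exp (-α * t) * (p + q * t))
            = α * (Real.exp (α * t) * ∫ w in (0:ℝ)..t, Real.exp (-α * w) * (p + q * w))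
              + (p + q * t) := by
          calc Real.exp (α * t) * α * (∫ w in (0:ℝ)..t, Real.exp (-α * w) * (p + q * w))
                + Real.exp (α * t) * (Real.exp (-α * t) * (p + q * t))
              = α * (Real.exp (α * t) * ∫ w in (0:ℝ)..t, Real.exp (-α * w) * (p + q * w))
                + (Real.exp (α * t) * Real.exp (-α * t)) * (p + q * t) := by ring
            _ = α * (Real.exp (α * t) * ∫ w in (0:ℝ)..t, Real.exp (-α * w) * (p + q * w))
                + (p + q * t) := by rw [hexp, one_mul]
        rw [← h4]
        exact h3
      · intro t ht
        apply mul_nonneg (Real.exp_nonneg _)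
        apply intervalIntegral.integral_nonneg ht.1
        intro r hr
        exact mul_nonneg (Real.exp_nonneg _) (hf01 r ⟨hr.1, le_trans hr.2 ht.2⟩)
    have ha₁cont : Continuous a₁ :=
      continuous_iff_continuousAt.2 fun t => (ha₁d t).differentiableAt.continuousAt
    set b : ℝ → ℝ := fun t => a₁ t + t with hbdef
    have hbeval : ∀ t : ℝ, b t = a₁ t + t := fun _ => rfl
    have hbcont : Continuous b := ha₁cont.add continuous_id
    have hb0 : b 0 = 0 := by rw [hbeval, ha₁0, add_zero]
    have hb1 : 1 ≤ b 1 := by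
      have h := ha₁nn 1 (right_mem_Icc.2 zero_le_one)
      rw [hbeval]
      linarith
    set S : Set ℝ := {t : ℝ | t ∈ Icc (0:ℝ) 1 ∧ b t = 1} with hSdef
    have hSne : S.Nonempty := by
      have h1 : (1:ℝ) ∈ Icc (b 0) (b 1) := by rw [hb0]; exact ⟨zero_le_one, hb1⟩
      obtain ⟨t, ht, hbt⟩ := intermediate_value_Icc zero_le_one hbcont.continuousOn h1
      exact ⟨t, ht, hbt⟩
    have hSbdd : BddBelow S := ⟨0, fun t ht => ht.1.1⟩
    have hSclosed : IsClosed S := by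
      have : S = Icc (0:ℝ) 1 ∩ b ⁻¹' {1} := by
        ext t; simp [hSdef]
      rw [this]
      exact isClosed_Icc.inter (isClosed_singleton.preimage hbcont)
    set τ : ℝ := sInf S with hτdef
    have hτS : τ ∈ S := hSclosed.csInf_mem hSne hSbdd
    have hτ01 : τ ∈ Icc (0:ℝ) 1 := hτS.1
    have hbτ : b τ = 1 := hτS.2
    have hble : ∀ t ∈ Icc (0:ℝ) τ, b t ≤ 1 := by
      intro t ht
      by_contra hgt
      push_neg at hgt
      have h1 : (1:ℝ) ∈ Icc (b 0) (b t) := by rw [hb0]; exact ⟨zero_le_one, hgt.le⟩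
      obtain ⟨t', ht', hbt'⟩ := intermediate_value_Icc ht.1 hbcont.continuousOn h1
      have ht'S : t' ∈ S := ⟨⟨ht'.1, le_trans ht'.2 (le_trans ht.2 hτ01.2)⟩, hbt'⟩
      have h2 : τ ≤ t' := csInf_le hSbdd ht'S
      have h3 : t = τ := le_antisymm ht.2 (le_trans h2 ht'.2)
      rw [h3, hbτ] at hgt
      exact lt_irrefl _ hgt
    -- the path
    set y : ℝ → Fin n → ℝ := fun t => x₀ + a₁ t • (z₀ - x₀) + t • (vstar - x₀) with hydef
    set d : ℝ → Fin n → ℝ :=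
      fun t => (α * a₁ t + (p + q * t)) • (z₀ - x₀) + (vstar - x₀) with hddef
    have hyd : ∀ t : ℝ, HasDerivAt y (d t) t := by
      intro t
      have h1 : HasDerivAt (fun r => a₁ r • (z₀ - x₀))
          ((α * a₁ t + (p + q * t)) • (z₀ - x₀)) t := (ha₁d t).smul_const (z₀ - x₀)
      have h2 : HasDerivAt (fun r : ℝ => r • (vstar - x₀)) ((1:ℝ) • (vstar - x₀)) t :=
        (hasDerivAt_id t).smul_const (vstar - x₀)
      have h3 := (h1.const_add x₀).add h2
      rw [one_smul] at h3
      exact h3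
    have hβu : β ⬝ᵥ (z₀ - x₀) = c := by simp [hcdef, dotProduct_sub]
    have hβw : β ⬝ᵥ (vstar - x₀) = e := by simp [hedef, dotProduct_sub]
    have hfeas : ∀ t ∈ Icc (0:ℝ) τ, β ⬝ᵥ (d t - (A.mulVec (y t) + a)) = 0 := by
      intro t _
      have h1 : β ⬝ᵥ (d t - (A.mulVec (y t) + a)) = β ⬝ᵥ d t - g (y t) := by
        simp [hgdef, dotProduct_sub]
      have h2 : β ⬝ᵥ d t = (α * a₁ t + (p + q * t)) * c + e := by
        simp only [hddef, dotProduct_add, dotProduct_smul, smul_eq_mul, hβu, hβw]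
      have h3 : g (y t) = g x₀ + a₁ t * (g z₀ - g x₀) + t * (g vstar - g x₀) := hgaff _ _
      have hc0 : c ≠ 0 := ne_of_lt hc
      have key : ∀ r w : ℝ, ((g z₀ - g x₀) / c * r + ((g x₀ - e) / c + (g vstar - g x₀) / c * w)) * c + e
          - (g x₀ + r * (g z₀ - g x₀) + w * (g vstar - g x₀)) = 0 := by
        intro r w
        field_simp
        ring
      rw [h1, h2, h3, hαdef, hpdef, hqdef]
      have h5 := key (a₁ t) t
      ring_nf
      ring_nf at h5
      linarith [h5]
    have hmemy : ∀ t ∈ Icc (0:ℝ) τ, y t ∈ Pt := by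
      intro t ht
      have ht1 : t ∈ Icc (0:ℝ) 1 := ⟨ht.1, le_trans ht.2 hτ01.2⟩
      have hr : 0 ≤ a₁ t := ha₁nn t ht1
      have hbt : a₁ t + t ≤ 1 := by
        have h := hble t ht
        rwa [hbeval] at h
      have hco : y t = (1 - a₁ t - t) • x₀ + a₁ t • z₀ + t • vstar := by
        simp only [hydef]
        module
      rw [hco]
      have h3 := hPtconv.sum_mem (t := (Finset.univ : Finset (Fin 3)))
        (w := ![1 - a₁ t - t, a₁ t, t]) (z := ![x₀, z₀, vstar])
        (fun i _ => by fin_cases i <;> simp <;> linarith [ht.1])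
        (by simp [Fin.sum_univ_three]; ring)
        (fun i _ => by fin_cases i <;> simp [hx₀, hz₀Pt, hvstarPt])
      simpa [Fin.sum_univ_three] using h3
    have hy0 : y 0 = x₀ := by simp [hydef, ha₁0]
    have ha₁τ : a₁ τ = 1 - τ := by
      have h := hbτ
      rw [hbeval] at h
      linarith
    have hyT : y τ ∈ F := by
      have hco : y τ = (1 - τ) • z₀ + τ • vstar := by
        simp only [hydef, ha₁τ]
        module
      rw [hco]
      exact hFconv hz₀F hvstarF (by linarith [hτ01.2]) hτ01.1 (by ring)
    exact canReach_of_path A a B β hrange Pt F x₀ τ hτ01.1 y d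
      (fun t _ => hyd t) hfeas hmemy hy0 hyT
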